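/- Let h : [0,1]^{M₁+⋯+M_K} → ℝ be a K-group permutation-invariant continuous function. Then there exist continuous functions ρ̄ : ℝ^{K+M_K} → ℝ and φ̄_k : ℝ → ℝ^{K+M_K} for k = 1,…,K (where M_K = Σ_k M_k) such that h(x) = ρ̄(Σ_{k=1}^K Σ_{m=1}^{M_k} φ̄_k(x_m^{(k)})) for all x. -/

import Mathlib

open Finset Polynomial

/-- Newton's identity over ℝ for a tuple. -/
lemma newton_real {n : ℕ} (f : Fin n → ℝ) (k : ℕ) :
    (k : ℝ) * (Finset.univ.val.map f).esymm k = (-1) ^ (k + 1) *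
      ∑ a ∈ Finset.HasAntidiagonal.antidiagonal k with a.1 < k,
        (-1) ^ a.1 * (Finset.univ.val.map f).esymm a.1 * ∑ m, f m ^ a.2 := by
  have h := congrArg (MvPolynomial.aeval f) (MvPolynomial.mul_esymm_eq_sum (Fin n) ℝ k)
  simpa [MvPolynomial.psum, MvPolynomial.aeval_esymm_eq_multiset_esymm,
    map_sum, map_mul, map_pow] using h

lemma esymm_eq_of_psum_eq {n : ℕ} (f g : Fin n → ℝ)
    (hp : ∀ i, 1 ≤ i → i ≤ n → ∑ m, f m ^ i = ∑ m, g m ^ i) :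
    ∀ k, k ≤ n → (Finset.univ.val.map f).esymm k = (Finset.univ.val.map g).esymm k := by
  intro k
  induction k using Nat.strong_induction_on with
  | _ k ih =>
    intro hk
    match k, hk with
    | 0, _ => simp [Multiset.esymm]
    | (k+1), hk =>
      have h1 := newton_real f (k+1)
      have h2 := newton_real g (k+1)
      have hsum : ∑ a ∈ Finset.HasAntidiagonal.antidiagonal (k+1) with a.1 < k+1,
            (-1:ℝ) ^ a.1 * (Finset.univ.val.map f).esymm a.1 * ∑ m, f m ^ a.2
          = ∑ a ∈ Finset.HasAntidiagonal.antidiagonal (k+1) with a.1 < k+1,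
            (-1:ℝ) ^ a.1 * (Finset.univ.val.map g).esymm a.1 * ∑ m, g m ^ a.2 := by
        refine Finset.sum_congr rfl fun a ha => ?_
        rw [Finset.mem_filter, Finset.HasAntidiagonal.mem_antidiagonal] at ha
        obtain ⟨hsumeq, hlt⟩ := ha
        rw [ih a.1 hlt (by omega), hp a.2 (by omega) (by omega)]
      rw [hsum, ← h2] at h1
      exact mul_left_cancel₀ (by positivity) h1

lemma multiset_eq_of_psum_eq {n : ℕ} (f g : Fin n → ℝ)
    (hp : ∀ i, 1 ≤ i → i ≤ n → ∑ m, f m ^ i = ∑ m, g m ^ i) :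
    Multiset.map f Finset.univ.val = Multiset.map g Finset.univ.val := by
  have hcf : Multiset.card (Multiset.map f Finset.univ.val) = n := by simp
  have hcg : Multiset.card (Multiset.map g Finset.univ.val) = n := by simp
  have hprod : ((Multiset.map f Finset.univ.val).map fun a => X - C a).prod
      = ((Multiset.map g Finset.univ.val).map fun a => X - C a).prod := by
    rw [Multiset.prod_X_sub_X_eq_sum_esymm, Multiset.prod_X_sub_X_eq_sum_esymm, hcf, hcg]
    refine Finset.sum_congr rfl fun j hj => ?_
    rw [Finset.mem_range] at hj
    rw [esymm_eq_of_psum_eq f g hp j (by omega)]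
  have := congrArg Polynomial.roots hprod
  rwa [Polynomial.roots_multiset_prod_X_sub_C, Polynomial.roots_multiset_prod_X_sub_C] at this

lemma exists_perm_of_multiset_eq {n : ℕ} {f g : Fin n → ℝ}
    (hm : Multiset.map f Finset.univ.val = Multiset.map g Finset.univ.val) :
    ∃ σ : Equiv.Perm (Fin n), f = g ∘ σ := by
  have hmono_f := Tuple.monotone_sort f
  have hmono_g := Tuple.monotone_sort g
  have hmf : Multiset.map (f ∘ Tuple.sort f) Finset.univ.val
      = Multiset.map f Finset.univ.val := by
    rw [← Multiset.map_map]
    congr 1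
    have := congrArg Finset.val (Finset.map_univ_equiv (Tuple.sort f))
    simpa [Finset.map_val] using this
  have hmg : Multiset.map (g ∘ Tuple.sort g) Finset.univ.val
      = Multiset.map g Finset.univ.val := by
    rw [← Multiset.map_map]
    congr 1
    have := congrArg Finset.val (Finset.map_univ_equiv (Tuple.sort g))
    simpa [Finset.map_val] using this
  have hlist : List.ofFn (f ∘ Tuple.sort f) = List.ofFn (g ∘ Tuple.sort g) := by
    have hperm : (List.ofFn (f ∘ Tuple.sort f) : Multiset ℝ)
        = (List.ofFn (g ∘ Tuple.sort g) : Multiset ℝ) := by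
      rw [← Fin.univ_val_map, ← Fin.univ_val_map, hmf, hmg, hm]
    exact List.Perm.eq_of_sortedLE (hmono_f.sortedLE_ofFn)
      (hmono_g.sortedLE_ofFn) (Multiset.coe_eq_coe.mp hperm)
  have hfun : f ∘ Tuple.sort f = g ∘ Tuple.sort g := List.ofFn_injective hlist
  refine ⟨(Tuple.sort f).symm.trans (Tuple.sort g), ?_⟩
  funext i
  have := congrFun hfun ((Tuple.sort f).symm i)
  simpa using this

lemma exists_perm_of_psum_eq {n : ℕ} (f g : Fin n → ℝ)
    (hp : ∀ i, 1 ≤ i → i ≤ n → ∑ m, f m ^ i = ∑ m, g m ^ i) :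
    ∃ σ : Equiv.Perm (Fin n), f = g ∘ σ :=
  exists_perm_of_multiset_eq (multiset_eq_of_psum_eq f g hp)



/-- Heterogeneous deep sets representation theorem: every `K`-group
permutation-invariant continuous function `h : [0,1]^{M₁+⋯+M_K} → ℝ` can be written
as `h x = ρ (∑ k, ∑ m, φ k (x k m))` with continuous `ρ : ℝ^{K + M_K} → ℝ` and
`φ k : ℝ → ℝ^{K + M_K}` where `M_K = ∑ k, M k`. -/
theorem heteroDeepSets_representation (K : ℕ) (hK : 0 < K) (M : Fin K → ℕ)
    (h : (∀ k : Fin K, Fin (M k) → ℝ) → ℝ)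
    (hcont : ContinuousOn h
      {x : ∀ k : Fin K, Fin (M k) → ℝ | ∀ k m, x k m ∈ Set.Icc (0 : ℝ) 1})
    (hinv : ∀ (π : ∀ k : Fin K, Equiv.Perm (Fin (M k)))
      (x : ∀ k : Fin K, Fin (M k) → ℝ),
      (∀ k m, x k m ∈ Set.Icc (0 : ℝ) 1) → h (fun k => x k ∘ π k) = h x) :
    ∃ (ρ : (Fin (K + ∑ k, M k) → ℝ) → ℝ)
      (φ : Fin K → ℝ → (Fin (K + ∑ k, M k) → ℝ)),
      Continuous ρ ∧ (∀ k, Continuous (φ k)) ∧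
        ∀ x : ∀ k : Fin K, Fin (M k) → ℝ, (∀ k m, x k m ∈ Set.Icc (0 : ℝ) 1) →
          h x = ρ (∑ k, ∑ m, φ k (x k m)) := by
  classical
  set N := K + ∑ k, M k with hN
  have hcard : Fintype.card (Σ k : Fin K, Fin (M k + 1)) = N := by
    simp [Fintype.card_sigma, Finset.sum_add_distrib, hN, add_comm]
  let e : (Σ k : Fin K, Fin (M k + 1)) ≃ Fin N := Fintype.equivFinOfCardEq hcard
  let φ : Fin K → ℝ → (Fin N → ℝ) := fun k t j =>
    if (e.symm j).1 = k then t ^ ((e.symm j).2 : ℕ) else 0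
  have hφc : ∀ k, Continuous (φ k) := by
    intro k
    refine continuous_pi fun j => ?_
    by_cases hkk : (e.symm j).1 = k
    · simpa [φ, hkk] using (continuous_pow ((e.symm j).2 : ℕ))
    · simpa [φ, hkk] using (continuous_const : Continuous fun _ : ℝ => (0:ℝ))
  let S : (∀ k, Fin (M k) → ℝ) → (Fin N → ℝ) := fun x => ∑ k, ∑ m, φ k (x k m)
  have hSc : Continuous S := by
    refine continuous_finset_sum _ fun k _ => continuous_finset_sum _ fun m _ => ?_
    exact (hφc k).comp ((continuous_apply m).comp (continuous_apply k))
  have hSeval : ∀ (x : ∀ k, Fin (M k) → ℝ) (k' : Fin K) (i : Fin (M k' + 1)),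
      S x (e ⟨k', i⟩) = ∑ m, x k' m ^ (i : ℕ) := by
    intro x k' i
    have hsig : e.symm (e ⟨k', i⟩) = ⟨k', i⟩ := e.symm_apply_apply _
    simp only [S, Finset.sum_apply, φ]
    rw [hsig]
    rw [Finset.sum_eq_single k']
    · simp
    · intro k _ hk
      simp [Ne.symm hk]
    · simp
  set Cube : Set (∀ k : Fin K, Fin (M k) → ℝ) :=
    {x | ∀ k m, x k m ∈ Set.Icc (0 : ℝ) 1} with hCubeDef
  have hkey : ∀ x y, x ∈ Cube → y ∈ Cube → S x = S y → h x = h y := by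
    intro x y hx hy hS
    have hperm : ∀ k, ∃ σ : Equiv.Perm (Fin (M k)), x k = y k ∘ σ := by
      intro k
      refine exists_perm_of_psum_eq (x k) (y k) fun i h1 h2 => ?_
      have := congrFun hS (e ⟨k, ⟨i, by omega⟩⟩)
      rw [hSeval, hSeval] at this
      simpa using this
    choose π hπ using hperm
    have := hinv π y hy
    rw [← this]
    congr 1
    funext k
    exact hπ k
  have hCube : IsCompact Cube := by
    have heq : Cube = Set.pi Set.univ
        (fun k => Set.pi Set.univ fun _ : Fin (M k) => Set.Icc (0:ℝ) 1) := by
      ext x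
      simp only [hCubeDef, Set.mem_setOf_eq, Set.mem_pi, Set.mem_univ, forall_true_left,
        Set.mem_Icc, forall_const]
    rw [heq]
    exact isCompact_univ_pi fun k => isCompact_univ_pi fun _ => isCompact_Icc
  haveI : CompactSpace Cube := isCompact_iff_compactSpace.mp hCube
  set T : Set (Fin N → ℝ) := S '' Cube with hTDef
  have hTc : IsCompact T := hCube.image hSc
  let q : Cube → T := fun x => ⟨S x, ⟨x.1, x.2, rfl⟩⟩
  have hqc : Continuous q := Continuous.subtype_mk (hSc.comp continuous_subtype_val) _
  have hqs : Function.Surjective q := by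
    rintro ⟨t, x, hx, rfl⟩
    exact ⟨⟨x, hx⟩, rfl⟩
  open Topology in
  have hq : Topology.IsQuotientMap q := (hqc.isClosedMap).isQuotientMap hqc hqs
  let ρ₀ : T → ℝ := fun t => h (Classical.choose t.2)
  have hρ₀ : ∀ x : Cube, ρ₀ (q x) = h x.1 := by
    intro x
    obtain ⟨hmem, heq⟩ := Classical.choose_spec (q x).2
    exact hkey _ _ hmem x.2 heq
  have hρ₀c : Continuous ρ₀ := by
    rw [hq.continuous_iff]
    have heq2 : (ρ₀ ∘ q) = fun x : Cube => h x.1 := funext hρ₀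
    rw [heq2]
    exact hcont.restrict
  obtain ⟨g, hg⟩ := ContinuousMap.exists_restrict_eq (hTc.isClosed) ⟨ρ₀, hρ₀c⟩
  refine ⟨g, φ, g.continuous, hφc, fun x hx => ?_⟩
  have hmem : S x ∈ T := ⟨x, hx, rfl⟩
  have h1 : g (S x) = ρ₀ ⟨S x, hmem⟩ := by
    have := congrFun (congrArg DFunLike.coe hg) ⟨S x, hmem⟩
    simpa using this
  have h2 : ρ₀ ⟨S x, hmem⟩ = h x := hρ₀ ⟨x, hx⟩
  exact (h1.trans h2).symm
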